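/- arXiv:2602.13560 — 8 statements merged into one kernel-verified Lean document; each statement's English description precedes it below -/
import Mathlib

section
/- Let R be a Noetherian ring with identity, M a finitely generated projective R-module, and S a chain (totally ordered by inclusion) of R-submodules of M such that M/A is projective for every A in S. Then S is a finite set. -/
open Submodule

/-- A linear order that is well-founded in both directions is finite. -/
private lemma finite_of_wf_wf {α : Type*} [LinearOrder α] [WellFoundedLT α] [WellFoundedGT α] :
    Finite α := by
  rcases isEmpty_or_nonempty α with h | h
  · infer_instance
  obtain ⟨a, h0, n, hn, hcov⟩ := exists_covBy_seq_of_wellFoundedLT_wellFoundedGT α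
  have key : ∀ k i, i + k = n → ∀ x : α, a i ≤ x → ∃ j ≤ n, x = a j := by
    intro k
    induction k with
    | zero =>
      intro i hi x hx
      have hi' : i = n := by omega
      subst hi'
      exact ⟨i, le_rfl, le_antisymm (hn hx) hx⟩
    | succ k ih =>
      intro i hi x hx
      have hin : i < n := by omega
      have hc := hcov i hin
      rcases le_or_gt (a (i + 1)) x with h1 | h1
      · exact ih (i + 1) (by omega) x h1
      · rcases eq_or_lt_of_le hx with he | he
        · exact ⟨i, by omega, he.symm⟩
        · exact absurd he (fun h' => hc.2 h' h1)
  have hfin : (Set.univ : Set α).Finite := by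
    apply Set.Finite.subset (Set.finite_range fun j : Fin (n + 1) => a j)
    intro x _
    have h0x : a 0 ≤ x := by
      rcases le_total x (a 0) with h | h
      · exact le_antisymm (h0 h) h ▸ le_rfl
      · exact h
    obtain ⟨j, hj, rfl⟩ := key n 0 (by omega) x h0x
    exact ⟨⟨j, by omega⟩, rfl⟩
  exact Set.finite_univ_iff.mp hfin

/-- If `M ⧸ A` is projective then `A` is a direct summand of `M`. -/
private lemma exists_isCompl_of_projective {R M : Type*} [Ring R] [AddCommGroup M] [Module R M]
    (A : Submodule R M) (h : Module.Projective R (M ⧸ A)) : ∃ C, IsCompl A C := by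
  haveI := h
  obtain ⟨g, hg⟩ := A.mkQ.exists_rightInverse_of_surjective A.range_mkQ
  have hgsec : ∀ y : M ⧸ A, A.mkQ (g y) = y := fun y => by
    simpa using LinearMap.congr_fun hg y
  refine ⟨LinearMap.range g, ⟨?_, ?_⟩⟩
  · rw [disjoint_iff, eq_bot_iff]
    rintro x ⟨hxA, y, rfl⟩
    have hy : y = 0 := by
      rw [← hgsec y]
      exact (Submodule.Quotient.mk_eq_zero A).2 hxA
    simp [hy]
  · rw [codisjoint_iff, eq_top_iff]
    intro x _
    have hmem : x - g (A.mkQ x) ∈ A := by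
      have : A.mkQ (x - g (A.mkQ x)) = 0 := by
        rw [map_sub, hgsec, sub_self]
      rwa [← Submodule.Quotient.mk_eq_zero A]
    have : x = (x - g (A.mkQ x)) + g (A.mkQ x) := by abel
    rw [this]
    exact Submodule.add_mem_sup hmem ⟨A.mkQ x, rfl⟩

/-- Lemma: over a Noetherian ring, a chain of submodules of a finitely generated
projective module all of whose quotients are projective is finite. -/
theorem stmt_0 {R : Type*} [Ring R] [IsNoetherianRing R]
    {M : Type*} [AddCommGroup M] [Module R M]
    [Module.Finite R M] [Module.Projective R M]
    (S : Set (Submodule R M)) (hchain : IsChain (· ≤ ·) S)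
    (hproj : ∀ A ∈ S, Module.Projective R (M ⧸ A)) :
    S.Finite := by
  haveI hNoeth : IsNoetherian R M := inferInstance
  letI : LinearOrder ↥S :=
    { (inferInstance : PartialOrder ↥S) with
      le_total := fun a b => by
        rcases eq_or_ne (a : Submodule R M) (b : Submodule R M) with h | h
        · exact Or.inl (le_of_eq (Subtype.coe_injective h))
        · exact hchain.total a.2 b.2
      toDecidableLE := Classical.decRel _ }
  haveI : WellFoundedGT ↥S :=
    (Subtype.strictMono_coe (· ∈ S)).wellFoundedGT
  haveI : WellFoundedLT ↥S := by
    constructor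
    rw [RelEmbedding.wellFounded_iff_isEmpty]
    constructor
    intro f
    -- `f` is a strictly decreasing sequence in `S`
    set u : ℕ → Submodule R M := fun n => ((f n : ↥S) : Submodule R M) with hu_def
    have hu : ∀ n, u (n + 1) < u n := by
      intro n
      exact Subtype.coe_lt_coe.2 (f.map_rel_iff.2 (Nat.lt_succ_self n))
    have hC : ∀ n, ∃ C, IsCompl (u (n + 1)) C := fun n =>
      exists_isCompl_of_projective _ (hproj _ (f (n + 1)).2)
    choose C hCc using hC
    set D : ℕ → Submodule R M := fun n => C n ⊓ u n with hD_def
    have hsum : ∀ n, u (n + 1) ⊔ D n = u n := by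
      intro n
      have h1 : (u (n + 1) ⊔ C n) ⊓ u n = u (n + 1) ⊔ C n ⊓ u n :=
        sup_inf_assoc_of_le (C n) (hu n).le
      rw [(hCc n).sup_eq_top, top_inf_eq] at h1
      exact h1.symm
    have hD0 : ∀ n, D n ≠ ⊥ := by
      intro n hDn
      have := hsum n
      rw [hDn, sup_bot_eq] at this
      exact absurd this (hu n).ne
    have hDdisj : ∀ n, Disjoint (D n) (u (n + 1)) :=
      fun n => ((hCc n).1.symm.mono_left inf_le_left)
    set G : ℕ → Submodule R M := fun n => Nat.rec ⊥ (fun k Gk => Gk ⊔ D k) n with hG_def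
    have hGs : ∀ n, G (n + 1) = G n ⊔ D n := fun n => rfl
    have hGdisj : ∀ n, Disjoint (G n) (u n) := by
      intro n
      induction n with
      | zero => exact disjoint_bot_left
      | succ n ih =>
        rw [hGs, Submodule.disjoint_def]
        intro x hx hxu
        obtain ⟨g, hg, d, hd, rfl⟩ := Submodule.mem_sup.mp hx
        have hdu : d ∈ u n := (Submodule.mem_inf.mp hd).2
        have hgu : g ∈ u n := by
          have : g = (g + d) - d := by abel
          rw [this]
          exact Submodule.sub_mem _ ((hu n).le hxu) hdu
        have hg0 : g = 0 := Submodule.disjoint_def.mp ih g hg hgu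
        subst hg0
        rw [zero_add] at hxu ⊢
        exact Submodule.disjoint_def.mp (hDdisj n) d hd hxu
    have hGmono : Monotone G := by
      apply monotone_nat_of_le_succ
      intro n
      rw [hGs]
      exact le_sup_left
    obtain ⟨n, hsta⟩ := monotone_stabilizes_iff_noetherian.mpr hNoeth ⟨G, hGmono⟩
    have hGn : G n = G (n + 1) := hsta (n + 1) (Nat.le_succ n)
    have hDle : D n ≤ G n := by
      rw [hGn, hGs]
      exact le_sup_right
    have : D n = ⊥ := by
      rw [eq_bot_iff]
      intro x hx
      exact (Submodule.mem_bot _).2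
        (Submodule.disjoint_def.mp (hGdisj n) x (hDle hx) ((Submodule.mem_inf.mp hx).2))
    exact hD0 n this
  haveI : Finite ↥S := finite_of_wf_wf
  exact S.toFinite
end

section
/- Let R be a commutative ring and let φ : M → N be a homomorphism of R-modules such that coker(φ) is projective. Then the image of the dual map φ* : N* → M* equals the annihilator of ker(φ) in M*, i.e. im(φ*) = {f ∈ M* : f(a) = 0 for all a ∈ ker(φ)}, provided M/ker(φ) is projective (which follows e.g. when M and N are projective). -/
/-- If coker(φ) and M/ker(φ) are projective, then the image of the dual map
φ* equals the annihilator of ker(φ). -/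
theorem stmt_3 {R : Type*} [CommRing R]
    {M N : Type*} [AddCommGroup M] [Module R M] [AddCommGroup N] [Module R N]
    (φ : M →ₗ[R] N)
    (hcoker : Module.Projective R (N ⧸ LinearMap.range φ))
    (hcoim : Module.Projective R (M ⧸ LinearMap.ker φ)) :
    LinearMap.range φ.dualMap = (LinearMap.ker φ).dualAnnihilator := by
  ext f
  simp only [LinearMap.mem_range, Submodule.mem_dualAnnihilator]
  constructor
  · rintro ⟨g, rfl⟩ x hx
    have : φ x = 0 := hx
    simp [LinearMap.dualMap_apply, this]
  · intro hf
    obtain ⟨s, hs⟩ := Module.projective_lifting_property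
      (LinearMap.range φ).mkQ (LinearMap.id) (Submodule.mkQ_surjective _)
    set q : (M ⧸ LinearMap.ker φ) →ₗ[R] R :=
      (LinearMap.ker φ).liftQ f (fun x hx => hf x hx)
    set h : (LinearMap.range φ) →ₗ[R] R :=
      q ∘ₗ (φ.quotKerEquivRange).symm.toLinearMap
    have hmem : ∀ n : N, n - s ((LinearMap.range φ).mkQ n) ∈ LinearMap.range φ := by
      intro n
      rw [← Submodule.Quotient.mk_eq_zero (LinearMap.range φ)]
      have : (LinearMap.range φ).mkQ (n - s ((LinearMap.range φ).mkQ n)) = 0 := by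
        rw [map_sub]
        have := congrFun (congrArg DFunLike.coe hs) ((LinearMap.range φ).mkQ n)
        simp only [LinearMap.comp_apply, LinearMap.id_apply] at this
        rw [this, sub_self]
      exact this
    set p : N →ₗ[R] (LinearMap.range φ) :=
      ((LinearMap.id : N →ₗ[R] N) - s ∘ₗ (LinearMap.range φ).mkQ).codRestrict
        (LinearMap.range φ) hmem
    refine ⟨h ∘ₗ p, ?_⟩
    ext x
    have hpx : p (φ x) = ⟨φ x, LinearMap.mem_range_self φ x⟩ := by
      apply Subtype.ext
      simp only [p, LinearMap.codRestrict_apply, LinearMap.sub_apply, LinearMap.id_apply,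
        LinearMap.comp_apply]
      have : (LinearMap.range φ).mkQ (φ x) = 0 := by
        simp [Submodule.Quotient.mk_eq_zero]
      rw [this, map_zero, sub_zero]
    have hsym : (φ.quotKerEquivRange).symm ⟨φ x, LinearMap.mem_range_self φ x⟩
        = Submodule.Quotient.mk x := by
      apply (φ.quotKerEquivRange).injective
      simp [LinearMap.quotKerEquivRange_apply_mk]
    simp only [LinearMap.dualMap_apply, LinearMap.comp_apply, hpx, h,
      LinearEquiv.coe_coe, hsym]
    simp [q]
    rfl
end

section
/- Let P be a totally ordered poset with distinct minimum r and maximum w, and let F : P → R-Mod be a functor such that (a) coker(F_{r,w}) is projective, (b) every structure map F_{x,y} (x ≤ y) is injective, and (c) F_r = M ⊕ N with M a nonzero projective R-module. Then F decomposes as an internal direct sum F = I ⊕ G of subfunctors, where I_x ≅ M for all x ∈ P, all structure maps of I are isomorphisms, I_r = M, and G_r = N. -/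
/-- Decomposition of a totally ordered persistence module with distinct minimum
r and maximum w, all structure maps injective, coker(F_{r,w}) projective, and a
decomposition F_r = M ⊕ N with M nonzero projective: F splits as I ⊕ G with
I of constant type M, I_r = M and G_r = N. -/
theorem stmt_7 {R : Type*} [Ring R] {P : Type*} [LinearOrder P]
    (F : P → Type*) [∀ x, AddCommGroup (F x)] [∀ x, Module R (F x)]
    (Fmap : ∀ x y : P, x ≤ y → (F x →ₗ[R] F y))
    (Fmap_id : ∀ x, Fmap x x le_rfl = LinearMap.id)
    (Fmap_comp : ∀ x y z (hxy : x ≤ y) (hyz : y ≤ z),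
      (Fmap y z hyz).comp (Fmap x y hxy) = Fmap x z (hxy.trans hyz))
    (r w : P) (hrw : r ≠ w) (hmin : ∀ x, r ≤ x) (hmax : ∀ x, x ≤ w)
    (hcoker : Module.Projective R
      (F w ⧸ LinearMap.range (Fmap r w (hmin w))))
    (hinj : ∀ x y (h : x ≤ y), Function.Injective (Fmap x y h))
    (M N : Submodule R (F r)) (hMN : IsCompl M N)
    (hM0 : M ≠ ⊥) (hMproj : Module.Projective R M) :
    ∃ I G : ∀ x, Submodule R (F x),
      (∀ x, IsCompl (I x) (G x)) ∧
      (∀ x y (h : x ≤ y), (I x).map (Fmap x y h) = I y) ∧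
      (∀ x y (h : x ≤ y), Set.InjOn (Fmap x y h) (I x : Set (F x))) ∧
      (∀ x y (h : x ≤ y), (G x).map (Fmap x y h) ≤ G y) ∧
      (∀ x, Nonempty (↥(I x) ≃ₗ[R] ↥M)) ∧
      I r = M ∧ G r = N := by
  haveI := hcoker
  set f := Fmap r w (hmin w) with hfdef
  -- split the cokernel: a complement C of range f in F w
  obtain ⟨s, hs⟩ := Module.projective_lifting_property (LinearMap.range f).mkQ
    LinearMap.id (Submodule.mkQ_surjective _)
  set C : Submodule R (F w) := LinearMap.range s with hCdef
  have hmem_range : ∀ v : F w, v ∈ LinearMap.range f ↔ (LinearMap.range f).mkQ v = 0 := by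
    intro v; simp [Submodule.Quotient.mk_eq_zero]
  have hdisj : ∀ v ∈ LinearMap.range f, v ∈ C → v = 0 := by
    rintro v hv ⟨q, rfl⟩
    have h1 : (LinearMap.range f).mkQ (s q) = q := LinearMap.congr_fun hs q
    rw [(hmem_range _).mp hv] at h1
    rw [← h1, map_zero]
  have hsup : LinearMap.range f ⊔ C = ⊤ := by
    rw [eq_top_iff]
    intro v _
    have h1 : v - s ((LinearMap.range f).mkQ v) ∈ LinearMap.range f := by
      have h3 := LinearMap.congr_fun hs ((LinearMap.range f).mkQ v)
      simp only [LinearMap.comp_apply, LinearMap.id_apply] at h3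
      rw [hmem_range, map_sub, h3, sub_self]
    have h2 : s ((LinearMap.range f).mkQ v) ∈ C := ⟨_, rfl⟩
    have := Submodule.add_mem_sup h1 h2
    rwa [sub_add_cancel] at this
  have hrange : M.map f ⊔ N.map f = LinearMap.range f := by
    rw [← Submodule.map_sup, codisjoint_iff.mp hMN.codisjoint, Submodule.map_top]
  set Gw : Submodule R (F w) := N.map f ⊔ C with hGwdef
  have hfinj : Function.Injective f := hinj r w (hmin w)
  have hMle : M.map f ≤ LinearMap.range f := fun v hv => by
    obtain ⟨m, _, hm⟩ := hv; exact ⟨m, hm⟩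
  have hNle : N.map f ≤ LinearMap.range f := fun v hv => by
    obtain ⟨m, _, hm⟩ := hv; exact ⟨m, hm⟩
  -- intersection is zero at w
  have hinter_w : ∀ v, v ∈ M.map f → v ∈ Gw → v = 0 := by
    intro v hvM hvG
    obtain ⟨y, hy, z, hz, rfl⟩ := Submodule.mem_sup.mp hvG
    have hz0 : z = 0 := by
      refine hdisj z ?_ hz
      have : (y + z) - y ∈ LinearMap.range f :=
        Submodule.sub_mem _ (hMle hvM) (hNle hy)
      simpa using this
    subst hz0
    rw [add_zero] at hvM ⊢
    have : y ∈ (M ⊓ N).map f := by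
      rw [Submodule.map_inf f hfinj]; exact ⟨hvM, hy⟩
    rw [disjoint_iff.mp hMN.disjoint, Submodule.map_bot, Submodule.mem_bot] at this
    exact this
  -- sum is everything at w
  have hsup_w : M.map f ⊔ Gw = ⊤ := by
    rw [hGwdef, ← sup_assoc, hrange, hsup]
  -- composition pointwise
  have hcomp : ∀ (x y z : P) (hxy : x ≤ y) (hyz : y ≤ z) (v : F x),
      Fmap y z hyz (Fmap x y hxy v) = Fmap x z (hxy.trans hyz) v := by
    intro x y z hxy hyz v
    exact LinearMap.congr_fun (Fmap_comp x y z hxy hyz) v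
  -- proof irrelevance on the ≤-proofs
  have hFeq : ∀ (x y : P) (h h' : x ≤ y), Fmap x y h = Fmap x y h' := fun _ _ _ _ => rfl
  refine ⟨fun x => M.map (Fmap r x (hmin x)),
          fun x => Gw.comap (Fmap x w (hmax x)), ?_, ?_, ?_, ?_, ?_, ?_, ?_⟩
  · -- IsCompl at every x
    intro x
    constructor
    · rw [disjoint_iff, eq_bot_iff]
      intro v hv
      obtain ⟨hvI, hvG⟩ := Submodule.mem_inf.mp hv
      rw [Submodule.mem_comap] at hvG
      obtain ⟨m, hm, rfl⟩ := hvI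
      rw [hcomp r x w (hmin x) (hmax x) m] at hvG
      have : Fmap r w ((hmin x).trans (hmax x)) m = 0 :=
        hinter_w _ ⟨m, hm, rfl⟩ hvG
      have hm0 : m = 0 := hinj r w _ (by simpa using this)
      simp [hm0]
    · rw [codisjoint_iff, eq_top_iff]
      intro v _
      have hv : Fmap x w (hmax x) v ∈ M.map f ⊔ Gw := by rw [hsup_w]; trivial
      obtain ⟨a, ⟨m, hm, rfl⟩, b, hb, hab⟩ := Submodule.mem_sup.mp hv
      refine Submodule.mem_sup.mpr ⟨Fmap r x (hmin x) m, ⟨m, hm, rfl⟩,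
        v - Fmap r x (hmin x) m, ?_, by abel⟩
      simp only [Submodule.mem_comap, map_sub]
      rw [hcomp r x w (hmin x) (hmax x) m]
      have : Fmap x w (hmax x) v - f m = b := by rw [← hab]; abel
      rw [show Fmap r w ((hmin x).trans (hmax x)) m = f m from rfl, this]
      exact hb
  · -- I maps onto I
    intro x y h
    rw [← Submodule.map_comp, Fmap_comp]
  · intro x y h
    exact (hinj x y h).injOn
  · -- G maps into G
    intro x y h
    rintro v ⟨u, hu, rfl⟩
    simp only [Submodule.mem_comap] at hu ⊢
    rw [hcomp x y w h (hmax y) u]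
    exact hu
  · intro x
    exact ⟨(Submodule.equivMapOfInjective (Fmap r x (hmin x)) (hinj r x (hmin x)) M).symm⟩
  · show Submodule.map (Fmap r r (hmin r)) M = M
    rw [show Fmap r r (hmin r) = (LinearMap.id : F r →ₗ[R] F r) from Fmap_id r,
      Submodule.map_id]
  · -- G r = N
    ext v
    simp only [Submodule.mem_comap]
    constructor
    · intro hv
      have hvtot : v ∈ M ⊔ N := by rw [codisjoint_iff.mp hMN.codisjoint]; trivial
      obtain ⟨m, hm, n, hn, rfl⟩ := Submodule.mem_sup.mp hvtot
      have hfn : Fmap r w (hmax r) n ∈ Gw :=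
        Submodule.mem_sup_left (⟨n, hn, rfl⟩ : Fmap r w (hmax r) n ∈ N.map f)
      have hfm : Fmap r w (hmax r) m ∈ Gw := by
        have := Submodule.sub_mem _ hv hfn
        rw [← map_sub] at this
        simpa using this
      have hm0 : m = 0 := by
        have := hinter_w _ ⟨m, hm, rfl⟩ hfm
        exact hinj r w _ (by simpa using this)
      simpa [hm0] using hn
    · intro hv
      exact Submodule.mem_sup_left (⟨v, hv, rfl⟩ : Fmap r w (hmax r) v ∈ N.map f)
end

section
/- Let P be a totally ordered poset with distinct minimum r and maximum w, and let F : P → R-Mod be a functor such that (a) every structure map F_{x,y} is surjective, (b) F_w is projective, and (c) F_w = M ⊕ N with M a nonzero projective R-module. Then F decomposes as an internal direct sum F = I ⊕ G of subfunctors, where I_x ≅ M for all x ∈ P, all structure maps of I are isomorphisms, I_w = M, and G_w = N. -/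
/-- Decomposition of a totally ordered persistence module with distinct minimum
r and maximum w, all structure maps surjective, F_w projective, and a
decomposition F_w = M ⊕ N with M nonzero projective: F splits as I ⊕ G with
I of constant type M, I_w = M and G_w = N. -/
theorem stmt_8 {R : Type*} [Ring R] {P : Type*} [LinearOrder P]
    (F : P → Type*) [∀ x, AddCommGroup (F x)] [∀ x, Module R (F x)]
    (Fmap : ∀ x y : P, x ≤ y → (F x →ₗ[R] F y))
    (Fmap_id : ∀ x, Fmap x x le_rfl = LinearMap.id)
    (Fmap_comp : ∀ x y z (hxy : x ≤ y) (hyz : y ≤ z),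
      (Fmap y z hyz).comp (Fmap x y hxy) = Fmap x z (hxy.trans hyz))
    (r w : P) (hrw : r ≠ w) (hmin : ∀ x, r ≤ x) (hmax : ∀ x, x ≤ w)
    (hsurj : ∀ x y (h : x ≤ y), Function.Surjective (Fmap x y h))
    (hwproj : Module.Projective R (F w))
    (M N : Submodule R (F w)) (hMN : IsCompl M N)
    (hM0 : M ≠ ⊥) (hMproj : Module.Projective R M) :
    ∃ I G : ∀ x, Submodule R (F x),
      (∀ x, IsCompl (I x) (G x)) ∧
      (∀ x y (h : x ≤ y), (I x).map (Fmap x y h) = I y) ∧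
      (∀ x y (h : x ≤ y), Set.InjOn (Fmap x y h) (I x : Set (F x))) ∧
      (∀ x y (h : x ≤ y), (G x).map (Fmap x y h) ≤ G y) ∧
      (∀ x, Nonempty (↥(I x) ≃ₗ[R] ↥M)) ∧
      I w = M ∧ G w = N := by

  classical
  -- lift the inclusion M ↪ F w through the surjection F r → F w
  obtain ⟨s, hs⟩ := Module.projective_lifting_property (Fmap r w (hmax r)) M.subtype
    (hsurj r w (hmax r))
  -- sections at every point
  set σ : ∀ x, ↥M →ₗ[R] F x := fun x => (Fmap r x (hmin x)).comp s with hσdef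
  have hπσ : ∀ x, (Fmap x w (hmax x)).comp (σ x) = M.subtype := by
    intro x
    show (Fmap x w (hmax x)).comp ((Fmap r x (hmin x)).comp s) = M.subtype
    rw [← LinearMap.comp_assoc, Fmap_comp]
    exact hs
  have hπσ' : ∀ x (m : ↥M), Fmap x w (hmax x) (σ x m) = (m : F w) := by
    intro x m
    exact LinearMap.congr_fun (hπσ x) m
  have hcompat : ∀ x y (h : x ≤ y), (Fmap x y h).comp (σ x) = σ y := by
    intro x y h
    show (Fmap x y h).comp ((Fmap r x (hmin x)).comp s) = (Fmap r y (hmin y)).comp s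
    rw [← LinearMap.comp_assoc, Fmap_comp]
  have hcompat' : ∀ x y (h : x ≤ y) (m : ↥M), Fmap x y h (σ x m) = σ y m := by
    intro x y h m
    exact LinearMap.congr_fun (hcompat x y h) m
  have hσinj : ∀ x, Function.Injective (σ x) := by
    intro x a b hab
    have : (a : F w) = (b : F w) := by
      rw [← hπσ' x a, ← hπσ' x b, hab]
    exact Subtype.ext this
  refine ⟨fun x => LinearMap.range (σ x), fun x => N.comap (Fmap x w (hmax x)),
    ?_, ?_, ?_, ?_, ?_, ?_, ?_⟩
  · -- IsCompl
    intro x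
    constructor
    · rw [Submodule.disjoint_def]
      rintro v ⟨m, rfl⟩ hvG
      have hmN : (m : F w) ∈ N := by
        have := Submodule.mem_comap.mp hvG
        rwa [hπσ' x m] at this
      have : (m : F w) = 0 :=
        (Submodule.disjoint_def.mp hMN.disjoint) (m : F w) m.2 hmN
      have : m = 0 := Subtype.ext this
      rw [this, map_zero]
    · rw [codisjoint_iff, eq_top_iff]
      intro v _
      have hmem : Fmap x w (hmax x) v ∈ M ⊔ N := by
        rw [hMN.sup_eq_top]; trivial
      obtain ⟨m, hm, n, hn, hmn⟩ := Submodule.mem_sup.mp hmem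
      refine Submodule.mem_sup.mpr ⟨σ x ⟨m, hm⟩, ⟨⟨m, hm⟩, rfl⟩, v - σ x ⟨m, hm⟩, ?_, by abel⟩
      refine Submodule.mem_comap.mpr ?_
      rw [map_sub, hπσ' x ⟨m, hm⟩]
      have : Fmap x w (hmax x) v - m = n := by rw [← hmn]; abel
      rw [this]; exact hn
  · -- map I x = I y
    intro x y h
    rw [← LinearMap.range_comp, hcompat x y h]
  · -- InjOn
    intro x y h a ha b hb hab
    obtain ⟨ma, rfl⟩ := ha
    obtain ⟨mb, rfl⟩ := hb
    have : σ y ma = σ y mb := by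
      rw [← hcompat' x y h ma, ← hcompat' x y h mb]; exact hab
    rw [hσinj y this]
  · -- G mapped into G
    intro x y h
    rw [Submodule.map_le_iff_le_comap]
    intro v hv
    refine Submodule.mem_comap.mpr (Submodule.mem_comap.mpr ?_)
    have : Fmap y w (hmax y) (Fmap x y h v) = Fmap x w (hmax x) v := by
      exact LinearMap.congr_fun (Fmap_comp x y w h (hmax y)) v
    rw [this]
    exact Submodule.mem_comap.mp hv
  · -- constant type M
    intro x
    exact ⟨(LinearEquiv.ofInjective (σ x) (hσinj x)).symm⟩
  · -- I w = M
    have : σ w = M.subtype := by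
      have := hπσ w
      rwa [show Fmap w w (hmax w) = LinearMap.id from Fmap_id w, LinearMap.id_comp] at this
    show LinearMap.range (σ w) = M
    rw [this, Submodule.range_subtype]
  · -- G w = N
    show Submodule.comap (Fmap w w (hmax w)) N = N
    rw [show Fmap w w (hmax w) = LinearMap.id from Fmap_id w]
    exact Submodule.comap_id N
end

section
/- Let R be a ring with identity, P a poset, and F : P → R-Mod a persistence module of projective constant type, i.e. F ≅ F(I, M) for some interval I in P and some indecomposable projective R-module M. Then F is indecomposable as a persistence module. -/
/-- An interval in a poset: a nonempty, convex and connected subset. -/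
def IsInterval {P : Type*} [PartialOrder P] (I : Set P) : Prop :=
  I.Nonempty ∧
  (∀ x y z : P, x ∈ I → z ∈ I → x ≤ y → y ≤ z → y ∈ I) ∧
  (∀ x z, x ∈ I → z ∈ I → ∃ (n : ℕ) (c : ℕ → P), c 0 = x ∧ c n = z ∧
    (∀ i ≤ n, c i ∈ I) ∧ ∀ i < n, c i ≤ c (i + 1) ∨ c (i + 1) ≤ c i)

/-- A persistence module of projective constant type F(I, M), with M an
indecomposable projective module, is indecomposable: it is nonzero, and in
any internal direct sum decomposition F = G ⊕ H into persistence submodules,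
one of the two factors vanishes. -/
theorem stmt_10 {R : Type*} [Ring R] {P : Type*} [PartialOrder P]
    (F : P → Type*) [∀ x, AddCommGroup (F x)] [∀ x, Module R (F x)]
    (Fmap : ∀ x y : P, x ≤ y → (F x →ₗ[R] F y))
    (Fmap_id : ∀ x, Fmap x x le_rfl = LinearMap.id)
    (Fmap_comp : ∀ x y z (hxy : x ≤ y) (hyz : y ≤ z),
      (Fmap y z hyz).comp (Fmap x y hxy) = Fmap x z (hxy.trans hyz))
    (I : Set P) (hI : IsInterval I)
    (M : Type*) [AddCommGroup M] [Module R M]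
    [Module.Projective R M]
    (hMne : Nontrivial M)
    (hMindec : ∀ (N L : Submodule R M), IsCompl N L → N = ⊥ ∨ L = ⊥)
    (hout : ∀ x, x ∉ I → Subsingleton (F x))
    (hiso : ∀ x, x ∈ I → Nonempty (F x ≃ₗ[R] M))
    (hbij : ∀ x y (h : x ≤ y), x ∈ I → y ∈ I → Function.Bijective (Fmap x y h)) :
    (∃ x, Nontrivial (F x)) ∧
    ∀ (G H : ∀ x, Submodule R (F x)),
      (∀ x y (h : x ≤ y), (G x).map (Fmap x y h) ≤ G y) →
      (∀ x y (h : x ≤ y), (H x).map (Fmap x y h) ≤ H y) →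
      (∀ x, IsCompl (G x) (H x)) →
      (∀ x, G x = ⊥) ∨ (∀ x, H x = ⊥) := by

  obtain ⟨x0, hx0⟩ := hI.1
  constructor
  · exact ⟨x0, ((hiso x0 hx0).some.toEquiv).nontrivial⟩
  intro G H hG hH hcompl
  -- outside I, every submodule is ⊥
  have hbotout : ∀ (K : ∀ x, Submodule R (F x)) x, x ∉ I → K x = ⊥ := by
    intro K x hx
    have := hout x hx
    refine eq_bot_iff.mpr fun v _ => ?_
    rw [Subsingleton.elim v (0 : F x)]
    exact Submodule.zero_mem ⊥
  -- key transport lemma along comparable pairs inside I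
  have key : ∀ x y (h : x ≤ y), x ∈ I → y ∈ I →
      ((G x = ⊥ ↔ G y = ⊥) ∧ (H x = ⊥ ↔ H y = ⊥)) := by
    intro x y h hx hy
    have hb := hbij x y h hx hy
    have hker : LinearMap.ker (Fmap x y h) = ⊥ := LinearMap.ker_eq_bot.mpr hb.1
    have hmap : ∀ (A B : ∀ x, Submodule R (F x)),
        (∀ x y (h : x ≤ y), (A x).map (Fmap x y h) ≤ A y) →
        (∀ x y (h : x ≤ y), (B x).map (Fmap x y h) ≤ B y) →
        (∀ x, IsCompl (A x) (B x)) →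
        (A x).map (Fmap x y h) = A y := by
      intro A B hA hB hc
      refine le_antisymm (hA x y h) fun g hg => ?_
      obtain ⟨v, rfl⟩ := hb.2 g
      have hv : v ∈ A x ⊔ B x := by rw [(hc x).sup_eq_top]; trivial
      obtain ⟨a, ha, b, hbm, hab⟩ := Submodule.mem_sup.mp hv
      have hfb : Fmap x y h b ∈ A y ⊓ B y := by
        constructor
        · have : Fmap x y h b = Fmap x y h v - Fmap x y h a := by
            rw [← hab]; simp
          rw [this]
          exact Submodule.sub_mem _ hg ((hA x y h) ⟨a, ha, rfl⟩)
        · exact hB x y h ⟨b, hbm, rfl⟩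
      rw [(hc y).inf_eq_bot] at hfb
      simp only [Submodule.mem_bot] at hfb
      have : Fmap x y h v = Fmap x y h a := by rw [← hab]; simp [hfb]
      exact ⟨a, ha, this.symm⟩
    have hmapG := hmap G H hG hH hcompl
    have hmapH := hmap H G hH hG (fun x => (hcompl x).symm)
    constructor
    · constructor
      · intro hGx; rw [← hmapG, hGx, Submodule.map_bot]
      · intro hGy
        refine (Submodule.eq_bot_iff _).mpr fun v hv => hb.1 ?_
        have : Fmap x y h v ∈ G y := hmapG ▸ ⟨v, hv, rfl⟩
        rw [hGy, Submodule.mem_bot] at this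
        simpa using this
    · constructor
      · intro hHx; rw [← hmapH, hHx, Submodule.map_bot]
      · intro hHy
        refine (Submodule.eq_bot_iff _).mpr fun v hv => hb.1 ?_
        have : Fmap x y h v ∈ H y := hmapH ▸ ⟨v, hv, rfl⟩
        rw [hHy, Submodule.mem_bot] at this
        simpa using this
  -- pointwise dichotomy inside I
  have hpoint : ∀ x, x ∈ I → G x = ⊥ ∨ H x = ⊥ := by
    intro x hx
    obtain ⟨e⟩ := hiso x hx
    let oi := Submodule.orderIsoMapComap e
    have hc : IsCompl (oi (G x)) (oi (H x)) := oi.isCompl (hcompl x)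
    rcases hMindec _ _ hc with h1 | h1
    · left
      have : oi (G x) = oi ⊥ := by rw [h1]; simp [oi]
      exact oi.injective this
    · right
      have : oi (H x) = oi ⊥ := by rw [h1]; simp [oi]
      exact oi.injective this
  -- propagation along chains
  have hprop : ∀ (K : ∀ x, Submodule R (F x)),
      (∀ x y (h : x ≤ y), x ∈ I → y ∈ I → (K x = ⊥ ↔ K y = ⊥)) →
      K x0 = ⊥ → ∀ z ∈ I, K z = ⊥ := by
    intro K hK h0 z hz
    obtain ⟨n, c, hc0, hcn, hmem, hstep⟩ := hI.2.2 x0 z hx0 hz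
    have : ∀ i ≤ n, K (c i) = ⊥ := by
      intro i
      induction i with
      | zero => intro _; rw [hc0]; exact h0
      | succ j ih =>
        intro hj
        have hjn : j ≤ n := Nat.le_of_succ_le hj
        have hprev := ih hjn
        rcases hstep j (Nat.lt_of_succ_le hj) with hle | hle
        · exact (hK _ _ hle (hmem j hjn) (hmem (j+1) hj)).mp hprev
        · exact (hK _ _ hle (hmem (j+1) hj) (hmem j hjn)).mpr hprev
    rw [← hcn]; exact this n le_rfl
  rcases hpoint x0 hx0 with h0 | h0
  · left
    intro z
    by_cases hz : z ∈ I
    · exact hprop G (fun x y h hx hy => (key x y h hx hy).1) h0 z hz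
    · exact hbotout G z hz
  · right
    intro z
    by_cases hz : z ∈ I
    · exact hprop H (fun x y h hx hy => (key x y h hx hy).2) h0 z hz
    · exact hbotout H z hz
end

section
/- Let R be a Noetherian ring with identity and F : A₂ → R-Mod a persistence module consisting of a single map φ = F_{1,2} : F₁ → F₂ between finitely generated modules, such that F₁, F₂, and coker(φ) are projective. Then F decomposes as a direct sum of three persistence submodules: one supported on {1} with value ker(φ), one supported on {1,2} whose structure map is an isomorphism onto im(φ), and one supported on {2} with value a complement of im(φ) in F₂. In particular, ker(φ) and im(φ) are projective, F₁ = ker(φ) ⊕ G₁ with G₁ ≅ im(φ), and F₂ = im(φ) ⊕ G₂. -/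
private theorem isCompl_ker_range_of_section {R M N : Type*} [Ring R]
    [AddCommGroup M] [Module R M] [AddCommGroup N] [Module R N]
    (f : M →ₗ[R] N) (g : N →ₗ[R] M) (h : f ∘ₗ g = LinearMap.id) :
    IsCompl (LinearMap.ker f) (LinearMap.range g) := by
  have hfg : ∀ y, f (g y) = y := fun y => congrArg (· y) (congrArg DFunLike.coe h)
  constructor
  · rw [disjoint_iff_inf_le]
    rintro x ⟨hx, y, rfl⟩
    have : y = 0 := by simpa [hfg] using hx
    simp [this]
  · rw [codisjoint_iff_le_sup]
    intro x _
    have hx : x = (x - g (f x)) + g (f x) := by abel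
    rw [hx]
    exact Submodule.add_mem_sup (by simp [hfg]) ⟨f x, rfl⟩

/-- An A₂-persistence module (a single map φ : F₁ → F₂) with F₁, F₂, coker(φ)
projective decomposes into three summands: ker(φ) supported on {1}, a summand
mapped isomorphically onto im(φ) supported on {1,2}, and a complement of
im(φ) supported on {2}. -/
theorem stmt_13 {R : Type*} [Ring R] [IsNoetherianRing R]
    {F₁ F₂ : Type*} [AddCommGroup F₁] [Module R F₁] [AddCommGroup F₂] [Module R F₂]
    [Module.Finite R F₁] [Module.Finite R F₂]
    [Module.Projective R F₁] [Module.Projective R F₂]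
    (φ : F₁ →ₗ[R] F₂)
    (hcoker : Module.Projective R (F₂ ⧸ LinearMap.range φ)) :
    Module.Projective R (LinearMap.ker φ) ∧
    Module.Projective R (LinearMap.range φ) ∧
    ∃ G₁ : Submodule R F₁, ∃ G₂ : Submodule R F₂,
      IsCompl (LinearMap.ker φ) G₁ ∧
      IsCompl (LinearMap.range φ) G₂ ∧
      Set.BijOn φ (G₁ : Set F₁) (LinearMap.range φ : Set F₂) ∧
      Nonempty (G₁ ≃ₗ[R] LinearMap.range φ) := by
  -- split the quotient map
  obtain ⟨g, hg⟩ := Module.projective_lifting_property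
    (LinearMap.range φ).mkQ LinearMap.id (Submodule.mkQ_surjective _)
  have hG₂ : IsCompl (LinearMap.range φ) (LinearMap.range g) := by
    simpa using isCompl_ker_range_of_section (LinearMap.range φ).mkQ g hg
  -- range φ is projective
  have hp : Module.Projective R (LinearMap.range φ) :=
    Module.Projective.of_split (LinearMap.range φ).subtype
      ((LinearMap.range φ).projectionOnto _ hG₂)
      (by ext x; simp)
  -- split rangeRestrict
  obtain ⟨σ, hσ⟩ := Module.projective_lifting_property
    φ.rangeRestrict LinearMap.id φ.surjective_rangeRestrict
  have hσ' : ∀ y, φ.rangeRestrict (σ y) = y :=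
    fun y => congrArg (· y) (congrArg DFunLike.coe hσ)
  have hker : IsCompl (LinearMap.ker φ) (LinearMap.range σ) := by
    have := isCompl_ker_range_of_section φ.rangeRestrict σ hσ
    rwa [LinearMap.ker_rangeRestrict] at this
  have hkp : Module.Projective R (LinearMap.ker φ) :=
    Module.Projective.of_split (LinearMap.ker φ).subtype
      ((LinearMap.ker φ).projectionOnto _ hker)
      (by ext x; simp)
  have hσinj : Function.Injective σ := by
    intro a b hab
    have := congrArg φ.rangeRestrict hab
    rwa [hσ' a, hσ' b] at this
  refine ⟨hkp, hp, LinearMap.range σ, LinearMap.range g, hker, hG₂, ?_, ?_⟩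
  · refine ⟨?_, ?_, ?_⟩
    · rintro x -
      exact ⟨x, rfl⟩
    · rintro x ⟨a, rfl⟩ y ⟨b, rfl⟩ hxy
      have : (σ a - σ b) ∈ LinearMap.ker φ ⊓ LinearMap.range σ :=
        ⟨by simp [LinearMap.mem_ker, map_sub, hxy], by
          exact ⟨a - b, by simp⟩⟩
      rw [hker.inf_eq_bot] at this
      have h0 := (Submodule.mem_bot R).mp this
      exact sub_eq_zero.mp h0
    · rintro y hy
      refine ⟨σ ⟨y, hy⟩, ⟨⟨y, hy⟩, rfl⟩, ?_⟩
      have := hσ' ⟨y, hy⟩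
      exact congrArg Subtype.val this
  · exact ⟨(LinearEquiv.ofInjective σ hσinj).symm⟩
end

section
/- Let R be a Noetherian ring with identity and consider an A₃-persistence module F₁ →^{f} F₂ →^{g} F₃ of finitely generated modules with f injective, g surjective, all F_i projective, and such that coker(g∘f) = F₃/im(g∘f), F₂/im(f), and the quotient F₂/(im(f) + ker(g)) are projective. Then F₂ admits an internal direct sum decomposition F₂ = (im(f) ∩ ker(g)) ⊕ G ⊕ K ⊕ H such that im(f) = (im(f) ∩ ker(g)) ⊕ G, ker(g) = (im(f) ∩ ker(g)) ⊕ K, and g restricts to isomorphisms on H and G. -/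
lemma aux_exists_isCompl {R M : Type*} [Ring R] [AddCommGroup M] [Module R M]
    (p : Submodule R M) (h : Module.Projective R (M ⧸ p)) : ∃ q, IsCompl p q := by
  obtain ⟨s, hs⟩ := Module.projective_lifting_property p.mkQ LinearMap.id p.mkQ_surjective
  refine ⟨LinearMap.range s, ⟨?_, ?_⟩⟩
  · rw [disjoint_iff_inf_le]
    rintro x ⟨hxp, y, rfl⟩
    have h1 : p.mkQ (s y) = y := LinearMap.congr_fun hs y
    have h2 : p.mkQ (s y) = 0 := (Submodule.Quotient.mk_eq_zero p).mpr hxp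
    rw [h2] at h1
    simp [← h1]
  · rw [codisjoint_iff_le_sup]
    intro x _
    have h1 : x - s (p.mkQ x) ∈ p := by
      rw [← Submodule.Quotient.mk_eq_zero p]
      have := LinearMap.congr_fun hs (p.mkQ x)
      simp only [LinearMap.comp_apply, LinearMap.id_apply, Submodule.mkQ_apply] at this ⊢
      rw [Submodule.Quotient.mk_sub, this]
      simp
    have : x = (x - s (p.mkQ x)) + s (p.mkQ x) := by abel
    rw [this]
    exact Submodule.add_mem _ (Submodule.mem_sup_left h1)
      (Submodule.mem_sup_right ⟨_, rfl⟩)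

lemma aux_projective_of_isCompl {R M : Type*} [Ring R] [AddCommGroup M] [Module R M]
    [Module.Projective R M] {p q : Submodule R M} (h : IsCompl p q) :
    Module.Projective R p :=
  Module.Projective.of_split p.subtype (p.projectionOnto q h)
    (by ext x; simp [Submodule.projectionOnto_apply_left])

/-- Case 1 of the A₃ decomposition: F₁ →f F₂ →g F₃ with f injective and g
surjective. F₂ decomposes as (im f ∩ ker g) ⊕ G ⊕ K ⊕ H with
im f = (im f ∩ ker g) ⊕ G, ker g = (im f ∩ ker g) ⊕ K, and g restricting to
isomorphisms (injections onto their images) on H and G. -/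
theorem stmt_14 {R : Type*} [Ring R] [IsNoetherianRing R]
    {F₁ F₂ F₃ : Type*} [AddCommGroup F₁] [Module R F₁] [AddCommGroup F₂] [Module R F₂]
    [AddCommGroup F₃] [Module R F₃]
    [Module.Finite R F₁] [Module.Finite R F₂] [Module.Finite R F₃]
    [Module.Projective R F₁] [Module.Projective R F₂] [Module.Projective R F₃]
    (f : F₁ →ₗ[R] F₂) (g : F₂ →ₗ[R] F₃)
    (hf : Function.Injective f) (hg : Function.Surjective g)
    (hcoker₁ : Module.Projective R (F₃ ⧸ LinearMap.range (g ∘ₗ f)))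
    (hcoker₂ : Module.Projective R (F₂ ⧸ LinearMap.range f))
    (hcoker₃ : Module.Projective R (F₂ ⧸ (LinearMap.range f ⊔ LinearMap.ker g))) :
    ∃ G K H : Submodule R F₂,
      DirectSum.IsInternal ![LinearMap.range f ⊓ LinearMap.ker g, G, K, H] ∧
      LinearMap.range f = (LinearMap.range f ⊓ LinearMap.ker g) ⊔ G ∧
      LinearMap.ker g = (LinearMap.range f ⊓ LinearMap.ker g) ⊔ K ∧
      Set.InjOn g (H : Set F₂) ∧ Set.InjOn g (G : Set F₂) := by
  set I := LinearMap.range f with hI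
  set N := LinearMap.ker g with hN
  set P := I ⊓ N with hP
  -- H : complement of I ⊔ N in F₂
  obtain ⟨H, hH⟩ := aux_exists_isCompl (I ⊔ N) hcoker₃
  -- range (g ∘ f) is projective
  obtain ⟨W, hW⟩ := aux_exists_isCompl (LinearMap.range (g ∘ₗ f)) hcoker₁
  haveI hrgf : Module.Projective R (LinearMap.range (g ∘ₗ f)) := aux_projective_of_isCompl hW
  -- ↥I ⧸ comap I.subtype N is projective
  have e1 : LinearMap.range (g ∘ₗ I.subtype) = LinearMap.range (g ∘ₗ f) := by
    rw [LinearMap.range_comp, LinearMap.range_comp, Submodule.range_subtype]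
  have e2 : LinearMap.ker (g ∘ₗ I.subtype) = Submodule.comap I.subtype N := by
    rw [LinearMap.ker_comp]
  have hproj1 : Module.Projective R (↥I ⧸ Submodule.comap I.subtype N) := by
    have e := (g ∘ₗ I.subtype).quotKerEquivRange
    rw [e1, e2] at e
    exact Module.Projective.of_equiv e.symm
  obtain ⟨q₁, hq₁⟩ := aux_exists_isCompl (Submodule.comap I.subtype N) hproj1
  -- ↥N ⧸ comap N.subtype I is projective
  have hmapIN : Submodule.map I.mkQ N = Submodule.map I.mkQ (I ⊔ N) := by
    rw [Submodule.map_sup, Submodule.mkQ_map_self, bot_sup_eq]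
  haveI hprojQ : Module.Projective R (Submodule.map I.mkQ (I ⊔ N)) := by
    haveI : Module.Projective R ((F₂ ⧸ I) ⧸ Submodule.map I.mkQ (I ⊔ N)) :=
      Module.Projective.of_equiv (Submodule.quotientQuotientEquivQuotient I (I ⊔ N) le_sup_left).symm
    obtain ⟨W', hW'⟩ := aux_exists_isCompl (Submodule.map I.mkQ (I ⊔ N)) this
    exact aux_projective_of_isCompl hW'
  have e3 : LinearMap.range (I.mkQ ∘ₗ N.subtype) = Submodule.map I.mkQ (I ⊔ N) := by
    rw [LinearMap.range_comp, Submodule.range_subtype, hmapIN]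
  have e4 : LinearMap.ker (I.mkQ ∘ₗ N.subtype) = Submodule.comap N.subtype I := by
    rw [LinearMap.ker_comp, Submodule.ker_mkQ]
  have hproj2 : Module.Projective R (↥N ⧸ Submodule.comap N.subtype I) := by
    have e := (I.mkQ ∘ₗ N.subtype).quotKerEquivRange
    rw [e3, e4] at e
    exact Module.Projective.of_equiv e.symm
  obtain ⟨q₂, hq₂⟩ := aux_exists_isCompl (Submodule.comap N.subtype I) hproj2
  set G := Submodule.map I.subtype q₁ with hGdef
  set K := Submodule.map N.subtype q₂ with hKdef
  -- basic facts
  have hGI : G ≤ I := by rw [hGdef]; exact Submodule.map_subtype_le I q₁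
  have hKN : K ≤ N := by rw [hKdef]; exact Submodule.map_subtype_le N q₂
  have hPG : P ⊔ G = I := by
    rw [hP, ← Submodule.map_comap_subtype I N, hGdef, ← Submodule.map_sup,
      hq₁.codisjoint.eq_top, Submodule.map_top, Submodule.range_subtype]
  have hPK : P ⊔ K = N := by
    rw [hP, inf_comm I N, ← Submodule.map_comap_subtype N I, hKdef, ← Submodule.map_sup,
      hq₂.codisjoint.eq_top, Submodule.map_top, Submodule.range_subtype]
  have hPG0 : P ⊓ G = ⊥ := by
    rw [hP, ← Submodule.map_comap_subtype I N, hGdef,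
      ← Submodule.map_inf _ I.injective_subtype, hq₁.disjoint.eq_bot, Submodule.map_bot]
  have hPK0 : P ⊓ K = ⊥ := by
    rw [hP, inf_comm I N, ← Submodule.map_comap_subtype N I, hKdef,
      ← Submodule.map_inf _ N.injective_subtype, hq₂.disjoint.eq_bot, Submodule.map_bot]
  have hGN0 : ∀ x, x ∈ G → x ∈ N → x = 0 := by
    intro x hxG hxN
    have : x ∈ P ⊓ G := ⟨⟨hGI hxG, hxN⟩, hxG⟩
    rw [hPG0] at this; simpa using this
  have hKI0 : ∀ x, x ∈ K → x ∈ I → x = 0 := by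
    intro x hxK hxI
    have : x ∈ P ⊓ K := ⟨⟨hxI, hKN hxK⟩, hxK⟩
    rw [hPK0] at this; simpa using this
  have hHIN : ∀ x, x ∈ H → x ∈ I ⊔ N → x = 0 := by
    intro x hxH hxIN
    have : x ∈ (⊥ : Submodule R F₂) := hH.disjoint.le_bot ⟨hxIN, hxH⟩
    simpa using this
  refine ⟨G, K, H, ?_, hPG.symm, hPK.symm, ?_, ?_⟩
  · rw [DirectSum.isInternal_submodule_iff_iSupIndep_and_iSup_eq_top]
    constructor
    · -- independence
      rw [iSupIndep_def]
      -- four elementwise disjointness facts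
      have d0 : Disjoint P (G ⊔ (K ⊔ H)) := by
        rw [disjoint_iff_inf_le]
        rintro x ⟨hxP, hx⟩
        simp only [SetLike.mem_coe] at hxP hx
        rw [Submodule.mem_sup] at hx
        obtain ⟨a, ha, y, hy, hxe⟩ := hx
        rw [Submodule.mem_sup] at hy
        obtain ⟨b, hb, c, hc, hye⟩ := hy
        have hcval : c = x - a - b := by rw [← hxe, ← hye]; abel
        have hc0 : c = 0 := by
          refine hHIN c hc ?_
          rw [hcval]
          exact Submodule.sub_mem _ (Submodule.sub_mem _
            (Submodule.mem_sup_left hxP.1) (Submodule.mem_sup_left (hGI ha)))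
            (Submodule.mem_sup_right (hKN hb))
        have hb0 : b = 0 := by
          refine hKI0 b hb ?_
          have hbval : b = x - a := by rw [hcval] at hc0; exact (sub_eq_zero.mp hc0).symm
          rw [hbval]; exact Submodule.sub_mem _ hxP.1 (hGI ha)
        have hxa : x = a := by rw [← hxe, ← hye, hb0, hc0]; abel
        rw [hxa]
        exact hGN0 a ha (hxa ▸ hxP.2) ▸ Submodule.zero_mem ⊥
      have d1 : Disjoint G (P ⊔ (K ⊔ H)) := by
        rw [disjoint_iff_inf_le]
        rintro x ⟨hxG, hx⟩
        simp only [SetLike.mem_coe] at hxG hx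
        rw [Submodule.mem_sup] at hx
        obtain ⟨p, hp, y, hy, hxe⟩ := hx
        rw [Submodule.mem_sup] at hy
        obtain ⟨b, hb, c, hc, hye⟩ := hy
        have hcval : c = x - p - b := by rw [← hxe, ← hye]; abel
        have hc0 : c = 0 := by
          refine hHIN c hc ?_
          rw [hcval]
          exact Submodule.sub_mem _ (Submodule.sub_mem _
            (Submodule.mem_sup_left (hGI hxG)) (Submodule.mem_sup_left hp.1))
            (Submodule.mem_sup_right (hKN hb))
        have hb0 : b = 0 := by
          refine hKI0 b hb ?_
          have hbval : b = x - p := by rw [hcval] at hc0; exact (sub_eq_zero.mp hc0).symm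
          rw [hbval]; exact Submodule.sub_mem _ (hGI hxG) hp.1
        have hxp : x = p := by rw [← hxe, ← hye, hb0, hc0]; abel
        have : x ∈ P ⊓ G := ⟨hxp ▸ hp, hxG⟩
        rw [hPG0] at this; exact this
      have d2 : Disjoint K (P ⊔ (G ⊔ H)) := by
        rw [disjoint_iff_inf_le]
        rintro x ⟨hxK, hx⟩
        simp only [SetLike.mem_coe] at hxK hx
        rw [Submodule.mem_sup] at hx
        obtain ⟨p, hp, y, hy, hxe⟩ := hx
        rw [Submodule.mem_sup] at hy
        obtain ⟨a, ha, c, hc, hye⟩ := hy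
        have hcval : c = x - p - a := by rw [← hxe, ← hye]; abel
        have hc0 : c = 0 := by
          refine hHIN c hc ?_
          rw [hcval]
          exact Submodule.sub_mem _ (Submodule.sub_mem _
            (Submodule.mem_sup_right (hKN hxK)) (Submodule.mem_sup_right hp.2))
            (Submodule.mem_sup_left (hGI ha))
        have ha0 : a = 0 := by
          refine hGN0 a ha ?_
          have haval : a = x - p := by rw [hcval] at hc0; exact (sub_eq_zero.mp hc0).symm
          rw [haval]; exact Submodule.sub_mem _ (hKN hxK) hp.2
        have hxp : x = p := by rw [← hxe, ← hye, ha0, hc0]; abel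
        have : x ∈ P ⊓ K := ⟨hxp ▸ hp, hxK⟩
        rw [hPK0] at this; exact this
      have d3 : Disjoint H (P ⊔ (G ⊔ K)) := by
        rw [disjoint_iff_inf_le]
        rintro x ⟨hxH, hx⟩
        simp only [SetLike.mem_coe] at hxH hx
        have hxIN : x ∈ I ⊔ N := by
          refine (sup_le (sup_le ?_ ?_) (sup_le ?_ ?_) :
            (P ⊔ G) ⊔ (P ⊔ K) ≤ I ⊔ N) ?_
          · exact le_trans inf_le_left le_sup_left
          · exact le_trans hGI le_sup_left
          · exact le_trans inf_le_left le_sup_left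
          · exact le_trans hKN le_sup_right
          · rw [Submodule.mem_sup] at hx ⊢
            obtain ⟨p, hp, y, hy, hxe⟩ := hx
            rw [Submodule.mem_sup] at hy
            obtain ⟨a, ha, b, hb, hye⟩ := hy
            exact ⟨p + a, Submodule.add_mem _ (Submodule.mem_sup_left hp)
              (Submodule.mem_sup_right ha),
              b, Submodule.mem_sup_right hb,
              by rw [← hxe, ← hye]; abel⟩
        simp [hHIN x hxH hxIN]
      intro i
      fin_cases i
      · refine Disjoint.mono_right ?_ d0
        apply iSup_le; intro j; apply iSup_le; intro hj
        fin_cases j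
        · simp at hj
        · exact le_sup_left
        · exact le_trans le_sup_left le_sup_right
        · exact le_trans le_sup_right le_sup_right
      · refine Disjoint.mono_right ?_ d1
        apply iSup_le; intro j; apply iSup_le; intro hj
        fin_cases j
        · exact le_sup_left
        · simp at hj
        · exact le_trans le_sup_left le_sup_right
        · exact le_trans le_sup_right le_sup_right
      · refine Disjoint.mono_right ?_ d2
        apply iSup_le; intro j; apply iSup_le; intro hj
        fin_cases j
        · exact le_sup_left
        · exact le_trans le_sup_left le_sup_right
        · simp at hj
        · exact le_trans le_sup_right le_sup_right
      · refine Disjoint.mono_right ?_ d3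
        apply iSup_le; intro j; apply iSup_le; intro hj
        fin_cases j
        · exact le_sup_left
        · exact le_trans le_sup_left le_sup_right
        · exact le_trans le_sup_right le_sup_right
        · simp at hj
    · -- iSup = ⊤
      rw [eq_top_iff, ← hH.codisjoint.eq_top]
      have l0 : P ≤ ⨆ i, ![P, G, K, H] i := by
        have := le_iSup ![P, G, K, H] 0; simpa using this
      have l1 : G ≤ ⨆ i, ![P, G, K, H] i := by
        have := le_iSup ![P, G, K, H] 1; simpa using this
      have l2 : K ≤ ⨆ i, ![P, G, K, H] i := by
        have := le_iSup ![P, G, K, H] 2; simpa using this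
      have l3 : H ≤ ⨆ i, ![P, G, K, H] i := by
        have := le_iSup ![P, G, K, H] 3; simpa using this
      refine sup_le (sup_le ?_ ?_) l3
      · rw [← hPG]; exact sup_le l0 l1
      · rw [← hPK]; exact sup_le l0 l2
  · -- InjOn on H
    intro x hx y hy hxy
    have hsub : x - y ∈ H := Submodule.sub_mem _ hx hy
    have hker : x - y ∈ I ⊔ N := Submodule.mem_sup_right (by
      simp only [hN, LinearMap.mem_ker, map_sub, hxy, sub_self])
    have := hHIN _ hsub hker
    exact sub_eq_zero.mp this
  · -- InjOn on G
    intro x hx y hy hxy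
    have hsub : x - y ∈ G := Submodule.sub_mem _ hx hy
    have hker : x - y ∈ N := by
      simp only [hN, LinearMap.mem_ker, map_sub, hxy, sub_self]
    exact sub_eq_zero.mp (hGN0 _ hsub hker)
end

section
/- Let P be a totally ordered poset and F : P → R-Mod a persistence module such that the cokernel of every structure map F_{x,y} is projective. If F = G ⊕ H is an internal direct sum decomposition into persistence submodules, then the cokernels of all structure maps G_{x,y} and H_{x,y} are also projective. -/
lemma aux_proj {R : Type*} [Ring R] {A B : Type*} [AddCommGroup A] [Module R A]
    [AddCommGroup B] [Module R B] (f : A →ₗ[R] B)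
    (Gx Hx : Submodule R A) (Gy Hy : Submodule R B)
    (hx : IsCompl Gx Hx) (hy : IsCompl Gy Hy)
    (hG : ∀ a ∈ Gx, f a ∈ Gy) (hH : ∀ a ∈ Hx, f a ∈ Hy)
    [Module.Projective R (B ⧸ LinearMap.range f)] :
    Module.Projective R (↥Gy ⧸ LinearMap.range (f.restrict hG)) := by
  set pG := Gy.projectionOnto Hy hy
  have hle1 : LinearMap.range (f.restrict hG) ≤
      (LinearMap.range f).comap Gy.subtype := by
    rintro _ ⟨⟨a, ha⟩, rfl⟩
    exact ⟨a, rfl⟩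
  have hle2 : LinearMap.range f ≤ (LinearMap.range (f.restrict hG)).comap pG := by
    rintro _ ⟨a, rfl⟩
    have hdecomp : (Gx.projectionOnto Hx hx a : A) + (Hx.projectionOnto Gx hx.symm a : A) = a :=
      Submodule.projection_add_projection_eq_self hx a
    set g := Gx.projectionOnto Hx hx a
    set h := Hx.projectionOnto Gx hx.symm a
    refine ⟨g, ?_⟩
    have : f a = f g + f h := by rw [← map_add, hdecomp]
    apply Subtype.ext
    rw [this, map_add]
    have h1 : pG (f (g : A)) = ⟨f g, hG g g.2⟩ :=
      Submodule.linearProjOfIsCompl_apply_left hy ⟨f g, hG g g.2⟩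
    have h2 : pG (f (h : A)) = 0 :=
      Submodule.projectionOnto_apply_of_mem_right hy (hH h h.2)
    rw [h1, h2, add_zero]
    rfl
  set i := Submodule.mapQ _ _ Gy.subtype hle1
  set s := Submodule.mapQ _ _ pG hle2
  refine Module.Projective.of_split i s ?_
  apply Submodule.linearMap_qext
  ext g
  simp [i, s, pG, Submodule.linearProjOfIsCompl_apply_left hy g]

/-- If all structure maps of a totally ordered persistence module F have
projective cokernels and F = G ⊕ H is an internal direct sum of persistence
submodules, then all structure maps of G and H have projective cokernels. -/
theorem stmt_17 {R : Type*} [Ring R] {P : Type*} [LinearOrder P]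
    (F : P → Type*) [∀ x, AddCommGroup (F x)] [∀ x, Module R (F x)]
    (Fmap : ∀ x y : P, x ≤ y → (F x →ₗ[R] F y))
    (Fmap_id : ∀ x, Fmap x x le_rfl = LinearMap.id)
    (Fmap_comp : ∀ x y z (hxy : x ≤ y) (hyz : y ≤ z),
      (Fmap y z hyz).comp (Fmap x y hxy) = Fmap x z (hxy.trans hyz))
    (hcoker : ∀ x y (h : x ≤ y),
      Module.Projective R (F y ⧸ LinearMap.range (Fmap x y h)))
    (G H : ∀ x, Submodule R (F x))
    (hGH : ∀ x, IsCompl (G x) (H x))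
    (hG : ∀ x y (h : x ≤ y), ∀ a ∈ G x, Fmap x y h a ∈ G y)
    (hH : ∀ x y (h : x ≤ y), ∀ a ∈ H x, Fmap x y h a ∈ H y) :
    (∀ x y (h : x ≤ y), Module.Projective R
      (↥(G y) ⧸ LinearMap.range ((Fmap x y h).restrict (hG x y h)))) ∧
    (∀ x y (h : x ≤ y), Module.Projective R
      (↥(H y) ⧸ LinearMap.range ((Fmap x y h).restrict (hH x y h)))) := by
  constructor
  · intro x y h
    have := hcoker x y h
    exact aux_proj (Fmap x y h) (G x) (H x) (G y) (H y) (hGH x) (hGH y)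
      (hG x y h) (hH x y h)
  · intro x y h
    have := hcoker x y h
    exact aux_proj (Fmap x y h) (H x) (G x) (H y) (G y) (hGH x).symm (hGH y).symm
      (hH x y h) (hG x y h)
end
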